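/- arXiv:1904.00321 — 3 statements merged into one kernel-verified Lean document; each statement's English description precedes it below -/
import Mathlib

section
/- Every nonempty compact Hausdorff topological semigroup (a semigroup with jointly continuous multiplication) contains an idempotent element. -/
/-- Ellis–Nakamura: every nonempty compact Hausdorff topological semigroup
contains an idempotent. -/
theorem stmt_0 (S : Type*) [Nonempty S] [TopologicalSpace S] [CompactSpace S] [T2Space S]
    (mul : S → S → S)
    (hassoc : ∀ a b c : S, mul (mul a b) c = mul a (mul b c))
    (hcont : Continuous fun p : S × S => mul p.1 p.2) :
    ∃ e : S, mul e e = e := by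
  letI : Mul S := ⟨mul⟩
  letI : Semigroup S := ⟨hassoc⟩
  exact exists_idempotent_of_compact_t2_of_continuous_mul_left fun r =>
    hcont.comp (continuous_id.prodMk (continuous_const (y := r)))
end

section
/- Let G and H be abelian groups, T ≤ G a subgroup, and π : G → ℝ^s a surjective group homomorphism with kernel T. Let U ⊆ G be a symmetric subset containing T and let φ : U → H be such that φ(x + y) = φ(x) + φ(y) whenever x, y, x + y ∈ U. Suppose there is a convex open neighborhood B of 0 in ℝ^s with π⁻¹(B) ⊆ U. Then φ extends to a group homomorphism ψ : G → H agreeing with φ on π⁻¹(B). -/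
/-- Extension of a local homomorphism along a surjection π : G → ℝ^s with kernel T. -/
theorem stmt_5 (G H : Type*) [AddCommGroup G] [AddCommGroup H] (s : ℕ)
    (T : AddSubgroup G) (π : G →+ (Fin s → ℝ))
    (hπsurj : Function.Surjective π) (hker : π.ker = T)
    (U : Set G) (hUsymm : -U = U) (hTU : (T : Set G) ⊆ U)
    (φ : G → H)
    (hφ : ∀ x y, x ∈ U → y ∈ U → x + y ∈ U → φ (x + y) = φ x + φ y)
    (B : Set (Fin s → ℝ)) (hBconv : Convex ℝ B) (hBopen : IsOpen B)
    (hB0 : (0 : Fin s → ℝ) ∈ B) (hBU : π ⁻¹' B ⊆ U) :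
    ∃ ψ : G →+ H, ∀ x ∈ π ⁻¹' B, ψ x = φ x := by
  classical
  have hmemU : ∀ z : G, π z ∈ B → z ∈ U := fun z hz => hBU hz
  have h0U : (0 : G) ∈ U := hmemU 0 (by simpa using hB0)
  have hφ0 : φ 0 = 0 := by
    have h := hφ 0 0 h0U h0U (by simpa using h0U)
    rw [add_zero] at h
    exact add_eq_left.mp h.symm
  -- Key "iterated addition" lemma
  have key3 : ∀ (k : ℕ) (u t : G), π t = 0 →
      (∀ j : ℕ, j ≤ k → j • π u ∈ B) → φ (k • u + t) = k • φ u + φ t := by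
    intro k
    induction k with
    | zero => intro u t ht hj; simp
    | succ k ih =>
      intro u t ht hj
      have h1 : π u ∈ B := by simpa using hj 1 (by omega)
      have h2 : π (k • u + t) ∈ B := by
        rw [map_add, map_nsmul, ht, add_zero]; exact hj k (Nat.le_succ k)
      have heq : (k + 1) • u + t = u + (k • u + t) := by
        rw [succ_nsmul]; abel
      have h3 : u + (k • u + t) ∈ U := by
        rw [← heq]
        refine hmemU _ ?_
        rw [map_add, map_nsmul, ht, add_zero]; exact hj (k + 1) le_rfl
      rw [heq, hφ u (k • u + t) (hmemU u h1) (hmemU _ h2) h3,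
        ih u t ht (fun j hjk => hj j (Nat.le_succ_of_le hjk)), succ_nsmul]
      abel
  -- reduction lemma
  have reduce : ∀ (x : G) (N M : ℕ) (y u : G), 0 < M →
      π y ∈ B → π x = N • π y → π y = M • π u →
      N • φ y + φ (x - N • y) = N • M • φ u + φ (x - N • M • u) := by
    intro x N M y u hM hy hxy hyu
    have hjB : ∀ j : ℕ, j ≤ M → j • π u ∈ B := by
      intro j hj
      have hMR : (M : ℝ) ≠ 0 := by exact_mod_cast hM.ne'
      have : j • π u = ((j : ℝ) / (M : ℝ)) • π y := by
        rw [hyu, ← Nat.cast_smul_eq_nsmul ℝ M (π u), ← Nat.cast_smul_eq_nsmul ℝ j (π u),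
          smul_smul]
        congr 1
        field_simp
      rw [this]
      refine hBconv.smul_mem_of_zero_mem hB0 hy ⟨by positivity, ?_⟩
      rw [div_le_one (by exact_mod_cast hM)]
      exact_mod_cast hj
    have hπyu : π (y - M • u) = 0 := by rw [map_sub, map_nsmul, hyu, sub_self]
    have h1 : φ y = M • φ u + φ (y - M • u) := by
      have h := key3 M u (y - M • u) hπyu hjB
      rw [show M • u + (y - M • u) = y by abel] at h
      exact h
    have hπt : π (x - N • y) = 0 := by rw [map_sub, map_nsmul, hxy, sub_self]
    have h2 : φ (N • (y - M • u) + (x - N • y)) = N • φ (y - M • u) + φ (x - N • y) :=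
      key3 N (y - M • u) (x - N • y) hπt
        (fun j _ => by rw [hπyu, smul_zero]; exact hB0)
    have h3 : N • (y - M • u) + (x - N • y) = x - N • M • u := by
      rw [smul_sub]; abel
    rw [h1, smul_add, ← h3, h2]
    abel
  -- independence of the choices
  have indep : ∀ (x : G) (N M : ℕ) (y w : G), 0 < N → 0 < M → π y ∈ B → π w ∈ B →
      π x = N • π y → π x = M • π w →
      N • φ y + φ (x - N • y) = M • φ w + φ (x - M • w) := by
    intro x N M y w hN hM hy hw hxy hxw
    obtain ⟨u, hu⟩ := hπsurj ((((N * M : ℕ) : ℝ))⁻¹ • π x)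
    have hNR : (N : ℝ) ≠ 0 := by exact_mod_cast hN.ne'
    have hMR : (M : ℝ) ≠ 0 := by exact_mod_cast hM.ne'
    have hyu : π y = M • π u := by
      rw [hu, ← Nat.cast_smul_eq_nsmul ℝ M, smul_smul]
      have hyv : π y = ((N : ℝ))⁻¹ • π x := by
        rw [hxy, ← Nat.cast_smul_eq_nsmul ℝ N, smul_smul, inv_mul_cancel₀ hNR, one_smul]
      rw [hyv]
      congr 1
      push_cast
      field_simp
    have hwu : π w = N • π u := by
      rw [hu, ← Nat.cast_smul_eq_nsmul ℝ N, smul_smul]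
      have hwv : π w = ((M : ℝ))⁻¹ • π x := by
        rw [hxw, ← Nat.cast_smul_eq_nsmul ℝ M, smul_smul, inv_mul_cancel₀ hMR, one_smul]
      rw [hwv]
      congr 1
      push_cast
      field_simp
    rw [reduce x N M y u hM hy hxy hyu, reduce x M N w u hN hw hxw hwu,
      smul_comm N M (φ u), smul_comm N M u]
  -- eventual membership
  have hEv : ∀ v : Fin s → ℝ, ∀ᶠ N : ℕ in Filter.atTop, ((N : ℝ))⁻¹ • v ∈ B := by
    intro v
    have h1 : Filter.Tendsto (fun N : ℕ => ((N : ℝ))⁻¹ • v) Filter.atTop (nhds 0) := by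
      have h2 : Filter.Tendsto (fun N : ℕ => ((N : ℝ))⁻¹) Filter.atTop (nhds 0) :=
        tendsto_inv_atTop_zero.comp tendsto_natCast_atTop_atTop
      simpa using h2.smul_const v
    exact h1.eventually (hBopen.eventually_mem hB0)
  -- existence of representatives (common for a, b, a+b)
  have hex3 : ∀ a b : G, ∃ (N : ℕ) (ya yb : G), 0 < N ∧ π ya ∈ B ∧ π yb ∈ B ∧
      π (ya + yb) ∈ B ∧ π a = N • π ya ∧ π b = N • π yb := by
    intro a b
    obtain ⟨N, hN1, ha, hb, hab⟩ :=
      ((Filter.eventually_atTop.mpr ⟨1, fun n hn => hn⟩).and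
        ((hEv (π a)).and ((hEv (π b)).and (hEv (π (a + b)))))).exists
    obtain ⟨ya, hya⟩ := hπsurj (((N : ℝ))⁻¹ • π a)
    obtain ⟨yb, hyb⟩ := hπsurj (((N : ℝ))⁻¹ • π b)
    have hNR : (N : ℝ) ≠ 0 := by
      exact_mod_cast (Nat.lt_of_lt_of_le Nat.zero_lt_one hN1).ne'
    refine ⟨N, ya, yb, hN1, by rw [hya]; exact ha, by rw [hyb]; exact hb, ?_, ?_, ?_⟩
    · rw [map_add, hya, hyb, ← smul_add, ← map_add]; exact hab
    · rw [hya, ← Nat.cast_smul_eq_nsmul ℝ N, smul_smul, mul_inv_cancel₀ hNR, one_smul]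
    · rw [hyb, ← Nat.cast_smul_eq_nsmul ℝ N, smul_smul, mul_inv_cancel₀ hNR, one_smul]
  have hex : ∀ x : G, ∃ p : ℕ × G, 0 < p.1 ∧ π p.2 ∈ B ∧ π x = p.1 • π p.2 := by
    intro x
    obtain ⟨N, y, _, hN, hy, _, _, hx, _⟩ := hex3 x 0
    exact ⟨(N, y), hN, hy, hx⟩
  choose p hp1 hp2 hp3 using hex
  set F : G → H := fun x => (p x).1 • φ (p x).2 + φ (x - (p x).1 • (p x).2) with hF
  have hFval : ∀ (x : G) (N : ℕ) (y : G), 0 < N → π y ∈ B → π x = N • π y →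
      F x = N • φ y + φ (x - N • y) := by
    intro x N y hN hy hxy
    exact indep x (p x).1 N (p x).2 y (hp1 x) hN (hp2 x) hy (hp3 x) hxy
  have hFadd : ∀ a b : G, F (a + b) = F a + F b := by
    intro a b
    obtain ⟨N, ya, yb, hN, hya, hyb, hyab, hka, hkb⟩ := hex3 a b
    have hkab : π (a + b) = N • π (ya + yb) := by
      rw [map_add, map_add, smul_add, hka, hkb]
    rw [hFval a N ya hN hya hka, hFval b N yb hN hyb hkb,
      hFval (a + b) N (ya + yb) hN hyab hkab]
    have e1 : φ (ya + yb) = φ ya + φ yb :=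
      hφ ya yb (hmemU _ hya) (hmemU _ hyb) (hmemU _ hyab)
    have hπa : π (a - N • ya) = 0 := by rw [map_sub, map_nsmul, hka, sub_self]
    have hπb : π (b - N • yb) = 0 := by rw [map_sub, map_nsmul, hkb, sub_self]
    have e2 : φ ((a - N • ya) + (b - N • yb)) = φ (a - N • ya) + φ (b - N • yb) :=
      hφ _ _ (hmemU _ (by rw [hπa]; exact hB0)) (hmemU _ (by rw [hπb]; exact hB0))
        (hmemU _ (by rw [map_add, hπa, hπb, add_zero]; exact hB0))
    have e3 : a + b - N • (ya + yb) = (a - N • ya) + (b - N • yb) := by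
      rw [smul_add]; abel
    rw [e3, e2, e1, smul_add]
    abel
  refine ⟨AddMonoidHom.mk' F hFadd, ?_⟩
  intro x hx
  have : F x = 1 • φ x + φ (x - 1 • x) := hFval x 1 x Nat.one_pos hx (by rw [one_smul])
  simpa [hφ0] using this
end

section
/- Let G be a group (written multiplicatively) and suppose n, m are endomorphisms of an abelian group A and d ∈ A such that the operation x ⊕ y = n(x) + m(y) + d on A is associative and both left- and right-cancellative. Then n and m are idempotent injective endomorphisms with n ∘ m = m ∘ n, n(d) = m(d); if moreover n and m are bijective, then n = m = id and (A, ⊕) is the group A with identity −d, i.e., x ⊕ y = x + y + d. -/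
/-- If x ⊕ y = n(x) + m(y) + d is associative and left/right cancellative on an
abelian group A, then n, m are injective idempotent commuting endomorphisms with
n(d) = m(d); if moreover n and m are bijective then n = m = id and
x ⊕ y = x + y + d. -/
theorem stmt_13 (A : Type*) [AddCommGroup A] (n m : A →+ A) (d : A)
    (hassoc : ∀ x y z : A,
      n (n x + m y + d) + m z + d = n x + m (n y + m z + d) + d)
    (hlcancel : ∀ x y y' : A, n x + m y + d = n x + m y' + d → y = y')
    (hrcancel : ∀ x x' y : A, n x + m y + d = n x' + m y + d → x = x') :
    (n.comp n = n ∧ m.comp m = m ∧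
      Function.Injective n ∧ Function.Injective m ∧
      n.comp m = m.comp n ∧ n d = m d) ∧
    (Function.Bijective n → Function.Bijective m →
      n = AddMonoidHom.id A ∧ m = AddMonoidHom.id A ∧
      ∀ x y : A, n x + m y + d = x + y + d) := by
  have hd : n d = m d := by
    have h := hassoc 0 0 0
    simp only [map_zero, zero_add, add_zero] at h
    exact add_right_cancel h
  have hnn : ∀ x, n (n x) = n x := by
    intro x
    have h := hassoc x 0 0
    simp only [map_zero, zero_add, add_zero, map_add, hd] at h
    exact add_right_cancel (add_right_cancel h)
  have hmm : ∀ x, m (m x) = m x := by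
    intro x
    have h := hassoc 0 0 x
    simp only [map_zero, zero_add, add_zero, map_add, hd] at h
    have h' : m (m x) + (m d + d) = m x + (m d + d) := by
      rw [← add_assoc, ← add_assoc]
      have := h
      abel_nf at this ⊢
      exact this.symm
    exact add_right_cancel h'
  have hcomm : ∀ x, n (m x) = m (n x) := by
    intro x
    have h := hassoc 0 x 0
    simp only [map_zero, zero_add, add_zero, map_add, hd] at h
    have h' : n (m x) + (m d + d) = m (n x) + (m d + d) := by
      abel_nf at h ⊢
      exact h
    exact add_right_cancel h'
  have hninj : Function.Injective n := by
    intro a b hab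
    exact hrcancel a b 0 (by rw [hab])
  have hminj : Function.Injective m := by
    intro a b hab
    exact hlcancel 0 a b (by rw [hab])
  refine ⟨⟨by ext x; exact hnn x, by ext x; exact hmm x, hninj, hminj,
    by ext x; exact hcomm x, hd⟩, fun _ _ => ?_⟩
  have hn : n = AddMonoidHom.id A := by
    ext x; exact hninj (hnn x)
  have hm : m = AddMonoidHom.id A := by
    ext x; exact hminj (hmm x)
  exact ⟨hn, hm, fun x y => by rw [hn, hm]; rfl⟩
end
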